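/- arXiv:2504.18747 — 3 statements merged into one kernel-verified Lean document; each statement's English description precedes it below -/
import Mathlib

section
/- Let S and T be positive semi-definite operators on a finite-dimensional Hilbert space with 0 ≤ S ≤ I and T ≥ 0. Then I − (S+T)^{−1/2} S (S+T)^{−1/2} ≤ 2(I − S) + 4T (Hayashi–Nagaoka operator inequality), where the inverse square root is taken on the support of S+T. -/
/-!
Hayashi–Nagaoka operator inequality:
for 0 ≤ S ≤ I and T ≥ 0 (positive semi-definite operators on a finite-dimensional
Hilbert space, modeled as matrices over ℂ),
  I − (S+T)^{−1/2} S (S+T)^{−1/2} ≤ 2(I − S) + 4T,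
where (S+T)^{−1/2} is the square root of the Moore–Penrose pseudoinverse of S+T,
realized by functional calculus with t ↦ t^{-1/2} on the support (t ≠ 0) of S+T.
The Loewner order A ≤ B is expressed as (B - A).PosSemidef.
-/

open Matrix
open scoped ComplexOrder

set_option linter.unusedSectionVars false

/-- Square root of the Moore–Penrose pseudoinverse of a Hermitian matrix, via
functional calculus: `t ↦ t^{-1/2}` on nonzero eigenvalues, `0` on the kernel. -/
noncomputable def pinvSqrt {n : Type*} [Fintype n] [DecidableEq n] {A : Matrix n n ℂ}
    (hA : A.IsHermitian) : Matrix n n ℂ :=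
  hA.cfc (fun t => if t = 0 then 0 else t ^ (-(1 / 2 : ℝ)))

set_option maxHeartbeats 1000000

namespace HN

variable {n : Type*} [Fintype n] [DecidableEq n] {A : Matrix n n ℂ} (hA : A.IsHermitian)

local notation "U" => (Matrix.IsHermitian.eigenvectorUnitary hA : Matrix n n ℂ)

lemma star_U_mul_U : star (Matrix.IsHermitian.eigenvectorUnitary hA : Matrix n n ℂ) *
    (Matrix.IsHermitian.eigenvectorUnitary hA : Matrix n n ℂ) = 1 :=
  Unitary.star_mul_self_of_mem (SetLike.coe_mem _)

lemma U_mul_star_U : (Matrix.IsHermitian.eigenvectorUnitary hA : Matrix n n ℂ) *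
    star (Matrix.IsHermitian.eigenvectorUnitary hA : Matrix n n ℂ) = 1 :=
  Unitary.mul_star_self_of_mem (SetLike.coe_mem _)

lemma cfc_mul_cfc (f g : ℝ → ℝ) :
    hA.cfc f * hA.cfc g = hA.cfc (fun x => f x * g x) := by
  unfold Matrix.IsHermitian.cfc
  simp only [Unitary.conjStarAlgAut_apply, Unitary.coe_star]
  have h1 : ∀ (D E : Matrix n n ℂ), (U * D * star U) * (U * E * star U)
      = U * (D * E) * star U := by
    intro D E
    calc (U * D * star U) * (U * E * star U)
        = U * (D * ((star U * U) * E)) * star U := by noncomm_ring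
      _ = U * (D * E) * star U := by rw [star_U_mul_U]; noncomm_ring
  rw [h1, diagonal_mul_diagonal]
  congr 1
  ext i
  simp [Function.comp]

lemma cfc_add_cfc (f g : ℝ → ℝ) :
    hA.cfc (fun x => f x + g x) = hA.cfc f + hA.cfc g := by
  unfold Matrix.IsHermitian.cfc
  simp only [Unitary.conjStarAlgAut_apply, Unitary.coe_star]
  have hfun : (diagonal (RCLike.ofReal ∘ (fun x => f x + g x) ∘ hA.eigenvalues) : Matrix n n ℂ)
      = diagonal (RCLike.ofReal ∘ f ∘ hA.eigenvalues)
        + diagonal (RCLike.ofReal ∘ g ∘ hA.eigenvalues) := by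
    rw [diagonal_add]
    exact (diagonal_eq_diagonal_iff).mpr fun i => by simp [Function.comp]
  rw [hfun, mul_add, add_mul]

lemma cfc_smul_cfc (r : ℝ) (f : ℝ → ℝ) :
    hA.cfc (fun x => r * f x) = (r : ℂ) • hA.cfc f := by
  unfold Matrix.IsHermitian.cfc
  simp only [Unitary.conjStarAlgAut_apply, Unitary.coe_star]
  have hfun : (RCLike.ofReal ∘ (fun x => r * f x) ∘ hA.eigenvalues : n → ℂ)
      = (r : ℂ) • (RCLike.ofReal ∘ f ∘ hA.eigenvalues) := by
    funext i; simp [Function.comp]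
  rw [hfun, diagonal_smul, mul_smul_comm, smul_mul_assoc]

lemma cfc_congr_ev {f g : ℝ → ℝ} (h : ∀ i, f (hA.eigenvalues i) = g (hA.eigenvalues i)) :
    hA.cfc f = hA.cfc g := by
  unfold Matrix.IsHermitian.cfc
  have hfun : (RCLike.ofReal ∘ f ∘ hA.eigenvalues : n → ℂ)
      = (RCLike.ofReal ∘ g ∘ hA.eigenvalues) := by
    funext i; simp [Function.comp, h i]
  rw [hfun]

lemma cfc_one' : hA.cfc (fun _ => 1) = 1 := by
  unfold Matrix.IsHermitian.cfc
  simp only [Unitary.conjStarAlgAut_apply, Unitary.coe_star]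
  have hfun : (RCLike.ofReal ∘ (fun _ => (1:ℝ)) ∘ hA.eigenvalues : n → ℂ) = fun _ => 1 := by
    funext i; simp [Function.comp]
  rw [hfun, diagonal_one, mul_one, U_mul_star_U]

lemma cfc_zero' : hA.cfc (fun _ => 0) = 0 := by
  unfold Matrix.IsHermitian.cfc
  simp only [Unitary.conjStarAlgAut_apply, Unitary.coe_star]
  have hfun : (RCLike.ofReal ∘ (fun _ => (0:ℝ)) ∘ hA.eigenvalues : n → ℂ) = fun _ => 0 := by
    funext i; simp [Function.comp]
  rw [hfun, diagonal_zero, mul_zero, zero_mul]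

lemma cfc_id' : hA.cfc (fun x => x) = A := by
  unfold Matrix.IsHermitian.cfc
  exact hA.spectral_theorem.symm

lemma cfc_sub_cfc (f g : ℝ → ℝ) :
    hA.cfc (fun x => f x - g x) = hA.cfc f - hA.cfc g := by
  have h1 : hA.cfc (fun x => f x - g x) = hA.cfc (fun x => f x + (-1) * g x) :=
    cfc_congr_ev hA (fun i => by ring)
  rw [h1, cfc_add_cfc, cfc_smul_cfc]
  push_cast
  module

lemma cfc_isHermitian (f : ℝ → ℝ) : (hA.cfc f).IsHermitian := by
  unfold Matrix.IsHermitian.cfc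
  simp only [Unitary.conjStarAlgAut_apply, Unitary.coe_star]
  have hD : (diagonal (RCLike.ofReal ∘ f ∘ hA.eigenvalues) : Matrix n n ℂ)ᴴ
      = diagonal (RCLike.ofReal ∘ f ∘ hA.eigenvalues) :=
    (isHermitian_diagonal_of_self_adjoint _ (funext fun i => by
      simp [Pi.star_def, Function.comp])).eq
  show (U * _ * star U)ᴴ = _
  calc (U * diagonal (RCLike.ofReal ∘ f ∘ hA.eigenvalues) * star U)ᴴ
      = U * (diagonal (RCLike.ofReal ∘ f ∘ hA.eigenvalues))ᴴ * star U := by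
        simp [star_eq_conjTranspose, conjTranspose_mul, mul_assoc]
    _ = _ := by rw [hD]

lemma cfc_posSemidef {f : ℝ → ℝ} (h : ∀ i, 0 ≤ f (hA.eigenvalues i)) :
    (hA.cfc f).PosSemidef := by
  unfold Matrix.IsHermitian.cfc
  simp only [Unitary.conjStarAlgAut_apply, Unitary.coe_star]
  have hd : (diagonal (RCLike.ofReal ∘ f ∘ hA.eigenvalues) : Matrix n n ℂ).PosSemidef := by
    rw [posSemidef_diagonal_iff]
    intro i
    simpa [Function.comp] using Complex.zero_le_real.mpr (h i)
  have := hd.mul_mul_conjTranspose_same U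
  rw [star_eq_conjTranspose]
  exact this

lemma psd_add_eq_zero {X Y : Matrix n n ℂ} (hX : X.PosSemidef) (hY : Y.PosSemidef)
    (h : X + Y = 0) : X = 0 := by
  have hv2 : ∀ x, X *ᵥ x = 0 := by
    intro x
    refine (hX.dotProduct_mulVec_zero_iff x).mp ?_
    have hsum : star x ⬝ᵥ (X *ᵥ x) + star x ⬝ᵥ (Y *ᵥ x) = 0 := by
      rw [← dotProduct_add, ← add_mulVec, h, zero_mulVec, dotProduct_zero]
    have hneg : star x ⬝ᵥ (X *ᵥ x) = - (star x ⬝ᵥ (Y *ᵥ x)) :=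
      eq_neg_of_add_eq_zero_left hsum
    exact le_antisymm (hneg ▸ neg_nonpos.mpr (hY.dotProduct_mulVec_nonneg x)) (hX.dotProduct_mulVec_nonneg x)
  ext i j
  have := congrFun (hv2 (Pi.single j 1)) i
  simpa using this

open scoped MatrixOrder in
lemma psd_conj_zero {X B : Matrix n n ℂ} (hX : X.PosSemidef) (hB : B.IsHermitian)
    (h : B * X * B = 0) : X * B = 0 := by
  obtain ⟨C, rfl⟩ := CStarAlgebra.nonneg_iff_eq_star_mul_self.mp hX.nonneg
  have h2 : (C * B)ᴴ * (C * B) = 0 := by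
    rw [conjTranspose_mul, hB.eq]
    calc B * Cᴴ * (C * B) = B * (Cᴴ * C) * B := by noncomm_ring
      _ = 0 := h
  have h3 : C * B = 0 := conjTranspose_mul_self_eq_zero.mp h2
  calc Cᴴ * C * B = Cᴴ * (C * B) := by rw [mul_assoc]
    _ = 0 := by rw [h3, mul_zero]

lemma psd_smul_real {X : Matrix n n ℂ} (hX : X.PosSemidef) {r : ℝ} (hr : 0 ≤ r) :
    ((r : ℂ) • X).PosSemidef := by
  refine Matrix.PosSemidef.of_dotProduct_mulVec_nonneg ?_ ?_
  · show ((r : ℂ) • X)ᴴ = (r : ℂ) • X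
    rw [conjTranspose_smul, hX.1.eq]
    norm_num
  · intro x
    rw [smul_mulVec, dotProduct_smul]
    exact mul_nonneg (Complex.zero_le_real.mpr hr) (hX.dotProduct_mulVec_nonneg x)

noncomputable def fP (t : ℝ) : ℝ := if t = 0 then 0 else t ^ (-(1 / 2 : ℝ))
noncomputable def fM (t : ℝ) : ℝ := Real.sqrt t
noncomputable def fInd (t : ℝ) : ℝ := if t = 0 then 0 else 1
noncomputable def fh (d : ℝ) : ℝ :=
  (3 - 18 * Real.sqrt d + 2 * Real.sqrt d * (Real.sqrt d - 1)
    * Real.sqrt (12 * d + 24 * Real.sqrt d + 3)) / (3 + 2 * d)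
noncomputable def fp (d : ℝ) : ℝ := 6 * Real.sqrt d - 1
noncomputable def fg (d : ℝ) : ℝ := fp d + fh d
noncomputable def fq2 (d : ℝ) : ℝ := 3 * fp d + 5 * fh d

lemma fP_eq {d : ℝ} (hd : 0 ≤ d) : fP d = (Real.sqrt d)⁻¹ := by
  unfold fP
  rcases eq_or_lt_of_le hd with h | h
  · simp [← h]
  · rw [if_neg h.ne', Real.sqrt_eq_rpow, ← Real.rpow_neg hd]

lemma fPfM {d : ℝ} (hd : 0 ≤ d) : fP d * fM d = fInd d := by
  rw [fP_eq hd]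
  unfold fM fInd
  rcases eq_or_lt_of_le hd with h | h
  · simp [← h]
  · rw [if_neg h.ne']
    exact inv_mul_cancel₀ (Real.sqrt_ne_zero'.mpr h)

lemma fMfM {d : ℝ} (hd : 0 ≤ d) : fM d * fM d = d := Real.mul_self_sqrt hd

lemma fPdfP {d : ℝ} (hd : 0 ≤ d) : fP d * d * fP d = fInd d := by
  rw [fP_eq hd]
  unfold fInd
  rcases eq_or_lt_of_le hd with h | h
  · simp [← h]
  · rw [if_neg h.ne']
    have h1 : Real.sqrt d ≠ 0 := Real.sqrt_ne_zero'.mpr h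
    have h2 : d = Real.sqrt d * Real.sqrt d := (Real.mul_self_sqrt hd).symm
    nth_rewrite 1 [h2]
    field_simp
    rw [Real.sqrt_sq (Real.sqrt_nonneg d)]
    exact h2

lemma fPddfP {d : ℝ} (hd : 0 ≤ d) : fP d * (d * d) * fP d = d := by
  rw [fP_eq hd]
  rcases eq_or_lt_of_le hd with h | h
  · simp [← h]
  · have h1 : Real.sqrt d ≠ 0 := Real.sqrt_ne_zero'.mpr h
    have h2 : Real.sqrt d * Real.sqrt d = d := Real.mul_self_sqrt hd
    field_simp
    rw [sq, h2]

lemma key_pointwise {d : ℝ} (hd : 0 ≤ d) :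
    15 * fg d ^ 2 + 10 * fh d ^ 2 * d = 30 * d + 120 * d ^ 2 := by
  set u := Real.sqrt d with hu
  have hu0 : 0 ≤ u := Real.sqrt_nonneg d
  have hud : u ^ 2 = d := Real.sq_sqrt hd
  set r := Real.sqrt (12 * d + 24 * u + 3) with hr
  have hr2 : r ^ 2 = 12 * d + 24 * u + 3 :=
    Real.sq_sqrt (by nlinarith)
  have hden : (3 : ℝ) + 2 * d ≠ 0 := by nlinarith
  have hfh : fh d = (3 - 18 * u + 2 * u * (u - 1) * r) / (3 + 2 * d) := rfl
  have hfg : fg d = (6 * u - 1) + fh d := rfl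
  rw [hfg, hfh]
  field_simp
  rw [← hud]
  have hr2' : r ^ 2 = 12 * u ^ 2 + 24 * u + 3 := by rw [hr2, hud]
  linear_combination (20 * u ^ 2 * (u - 1) ^ 2 * (3 + 2 * u ^ 2)) * hr2'

end HN

open HN

theorem hayashi_nagaoka {n : Type*} [Fintype n] [DecidableEq n]
    (S T : Matrix n n ℂ) (hS : S.PosSemidef) (hSle : ((1 : Matrix n n ℂ) - S).PosSemidef)
    (hT : T.PosSemidef) :
    ((2 : ℂ) • ((1 : Matrix n n ℂ) - S) + (4 : ℂ) • T -
      ((1 : Matrix n n ℂ) -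
        pinvSqrt (hS.add hT).1 * S * pinvSqrt (hS.add hT).1)).PosSemidef := by

  have hAp : (S + T).PosSemidef := hS.add hT
  set hA : (S + T).IsHermitian := hAp.1 with hhA
  have hev : ∀ i, 0 ≤ hA.eigenvalues i := hAp.eigenvalues_nonneg
  -- matrices
  set P : Matrix n n ℂ := pinvSqrt hA with hPdef
  have hPcfc : P = hA.cfc fP := rfl
  set M : Matrix n n ℂ := hA.cfc fM with hMdef
  set Pi : Matrix n n ℂ := hA.cfc fInd with hPidef
  set Hh : Matrix n n ℂ := hA.cfc fh with hHhdef
  set G2 : Matrix n n ℂ := hA.cfc fg with hG2def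
  set Q2 : Matrix n n ℂ := hA.cfc fq2 with hQ2def
  -- hermitian facts
  have hPh : P.IsHermitian := hPcfc ▸ cfc_isHermitian hA fP
  have hMh : M.IsHermitian := cfc_isHermitian hA fM
  have hPih : Pi.IsHermitian := cfc_isHermitian hA fInd
  have hHhh : Hh.IsHermitian := cfc_isHermitian hA fh
  have hG2h : G2.IsHermitian := cfc_isHermitian hA fg
  have hQ2h : Q2.IsHermitian := cfc_isHermitian hA fq2
  -- products of functions of A
  have hPM : P * M = Pi := by
    rw [hPcfc, hMdef, hPidef, cfc_mul_cfc]
    exact cfc_congr_ev hA (fun i => fPfM (hev i))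
  have hMP : M * P = Pi := by
    rw [hPcfc, hMdef, hPidef, cfc_mul_cfc]
    exact cfc_congr_ev hA (fun i => by rw [mul_comm]; exact fPfM (hev i))
  have hMM : M * M = S + T := by
    rw [hMdef, cfc_mul_cfc]
    rw [show (fun x => fM x * fM x) = fun x : ℝ => fM x * fM x from rfl]
    calc hA.cfc (fun x => fM x * fM x) = hA.cfc (fun x => x) :=
          cfc_congr_ev hA (fun i => fMfM (hev i))
      _ = S + T := cfc_id' hA
  have hPAP : P * (S + T) * P = Pi := by
    have h1 : hA.cfc fP * hA.cfc (fun x => x) * hA.cfc fP = hA.cfc fInd := by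
      rw [cfc_mul_cfc, cfc_mul_cfc]
      exact cfc_congr_ev hA (fun i => fPdfP (hev i))
    rw [cfc_id' hA] at h1
    rw [hPcfc, hPidef]
    exact h1
  have hPAAP : P * ((S + T) * (S + T)) * P = S + T := by
    have h1 : hA.cfc fP * (hA.cfc (fun x => x) * hA.cfc (fun x => x)) * hA.cfc fP
        = hA.cfc (fun x => x) := by
      rw [cfc_mul_cfc, cfc_mul_cfc, cfc_mul_cfc]
      exact cfc_congr_ev hA (fun i => fPddfP (hev i))
    rw [cfc_id' hA] at h1
    rw [hPcfc]
    exact h1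
  -- support projection facts
  have hJ : (1 : Matrix n n ℂ) - Pi = hA.cfc (fun d => 1 - fInd d) := by
    rw [cfc_sub_cfc, cfc_one', hPidef]
  have hJherm : ((1 : Matrix n n ℂ) - Pi).IsHermitian := hJ ▸ cfc_isHermitian hA _
  have hJAJ : ((1 : Matrix n n ℂ) - Pi) * (S + T) * ((1 : Matrix n n ℂ) - Pi) = 0 := by
    have h0 : hA.cfc (fun x => (1 - fInd x) * x * (1 - fInd x)) = hA.cfc (fun _ => 0) := by
      refine cfc_congr_ev hA (fun i => ?_)
      unfold fInd
      rcases eq_or_ne (hA.eigenvalues i) 0 with h | h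
      · rw [h]; simp
      · rw [if_neg h]; ring
    have h1 : hA.cfc (fun d => 1 - fInd d) * hA.cfc (fun x => x) * hA.cfc (fun d => 1 - fInd d)
        = (0 : Matrix n n ℂ) := by
      rw [cfc_mul_cfc, cfc_mul_cfc, h0, cfc_zero' hA]
    rw [cfc_id' hA] at h1
    rw [hJ]
    exact h1
  have hSJJ : ((1 : Matrix n n ℂ) - Pi) * S * ((1 : Matrix n n ℂ) - Pi) = 0 := by
    have hX : (((1 : Matrix n n ℂ) - Pi) * S * ((1 : Matrix n n ℂ) - Pi)).PosSemidef := by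
      have := hS.mul_mul_conjTranspose_same ((1 : Matrix n n ℂ) - Pi)
      rwa [hJherm.eq] at this
    have hY : (((1 : Matrix n n ℂ) - Pi) * T * ((1 : Matrix n n ℂ) - Pi)).PosSemidef := by
      have := hT.mul_mul_conjTranspose_same ((1 : Matrix n n ℂ) - Pi)
      rwa [hJherm.eq] at this
    refine psd_add_eq_zero hX hY ?_
    calc ((1 : Matrix n n ℂ) - Pi) * S * ((1 : Matrix n n ℂ) - Pi)
          + ((1 : Matrix n n ℂ) - Pi) * T * ((1 : Matrix n n ℂ) - Pi)
        = ((1 : Matrix n n ℂ) - Pi) * (S + T) * ((1 : Matrix n n ℂ) - Pi) := by noncomm_ring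
      _ = 0 := hJAJ
  have hSJ : S * ((1 : Matrix n n ℂ) - Pi) = 0 := psd_conj_zero hS hJherm hSJJ
  have hSPi : S * Pi = S := by
    have := hSJ
    rw [mul_sub, mul_one, sub_eq_zero] at this
    exact this.symm
  have hPiS : Pi * S = S := by
    have h1 : (S * Pi)ᴴ = Sᴴ := congrArg conjTranspose hSPi
    rwa [conjTranspose_mul, hPih.eq, hS.1.eq] at h1
  have hPMSMP : P * (M * S * M) * P = S := by
    calc P * (M * S * M) * P = (P * M) * S * (M * P) := by noncomm_ring
      _ = Pi * S * Pi := by rw [hPM, hMP]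
      _ = S := by rw [hPiS, hSPi]
  -- linear expressions
  have hQ2lin : Q2 = (18:ℂ)•M + (5:ℂ)•Hh - (3:ℂ)•(1 : Matrix n n ℂ) := by
    calc Q2 = hA.cfc (fun d => (18 * fM d + 5 * fh d) - 3 * 1) :=
          cfc_congr_ev hA (fun i => by unfold fq2 fp fM; ring)
      _ = hA.cfc (fun d => 18 * fM d + 5 * fh d) - hA.cfc (fun d => 3 * 1) :=
          cfc_sub_cfc hA _ _
      _ = hA.cfc (fun d => 18 * fM d) + hA.cfc (fun d => 5 * fh d)
            - hA.cfc (fun d => 3 * 1) := by rw [cfc_add_cfc]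
      _ = (18:ℂ)•M + (5:ℂ)•Hh - (3:ℂ)•(1 : Matrix n n ℂ) := by
          rw [cfc_smul_cfc hA 18 fM, cfc_smul_cfc hA 5 fh, cfc_smul_cfc hA 3 (fun _ => 1),
            cfc_one']
          norm_num
          rfl
  have hG2lin : G2 = (6:ℂ)•M + Hh - (1 : Matrix n n ℂ) := by
    calc G2 = hA.cfc (fun d => (6 * fM d + fh d) - 1 * 1) :=
          cfc_congr_ev hA (fun i => by unfold fg fp fM; ring)
      _ = hA.cfc (fun d => 6 * fM d + fh d) - hA.cfc (fun d => 1 * 1) :=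
          cfc_sub_cfc hA _ _
      _ = hA.cfc (fun d => 6 * fM d) + hA.cfc fh - hA.cfc (fun d => 1 * 1) := by
          rw [cfc_add_cfc]
      _ = (6:ℂ)•M + Hh - (1 : Matrix n n ℂ) := by
          rw [cfc_smul_cfc hA 6 fM, cfc_smul_cfc hA 1 (fun _ => 1), cfc_one']
          norm_num
          rfl
  -- function part
  have hfnpart : (15:ℂ)•(G2*G2) + (10:ℂ)•(Hh*(S+T)*Hh)
      = (30:ℂ)•(S+T) + (120:ℂ)•((S+T)*(S+T)) := by
    have h1 : G2 * G2 = hA.cfc (fun d => fg d * fg d) := cfc_mul_cfc hA fg fg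
    have h2 : Hh * hA.cfc (fun x => x) * Hh = hA.cfc (fun d => fh d * d * fh d) := by
      rw [cfc_mul_cfc, cfc_mul_cfc]
    rw [cfc_id' hA] at h2
    have h3 : hA.cfc (fun x => x) * hA.cfc (fun x => x) = hA.cfc (fun d => d * d) :=
      cfc_mul_cfc hA _ _
    rw [cfc_id' hA] at h3
    rw [h1, h2, show (15:ℂ) = ((15:ℝ):ℂ) by norm_num, show (10:ℂ) = ((10:ℝ):ℂ) by norm_num,
      ← cfc_smul_cfc hA 15 (fun d => fg d * fg d),
      ← cfc_smul_cfc hA 10 (fun d => fh d * d * fh d), ← cfc_add_cfc]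
    have h4 : hA.cfc (fun d => 15 * (fg d * fg d) + 10 * (fh d * d * fh d))
        = hA.cfc (fun d => 30 * d + 120 * (d * d)) := by
      refine cfc_congr_ev hA (fun i => ?_)
      linear_combination key_pointwise (hev i)
    rw [h4, cfc_add_cfc, cfc_smul_cfc hA 30 (fun x => x),
      cfc_smul_cfc hA 120 (fun d => d * d), cfc_id' hA, ← h3,
      show ((30:ℝ):ℂ) = (30:ℂ) by norm_num, show ((120:ℝ):ℂ) = (120:ℂ) by norm_num]
  -- noncommutative S-part
  have hSpart : (36:ℂ)•(((1 : Matrix n n ℂ)-M)*S*((1 : Matrix n n ℂ)-M)) + Q2*S*Q2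
      - (15:ℂ)•(G2*S*G2) - (10:ℂ)•(Hh*S*Hh)
      = (30:ℂ)•S - (180:ℂ)•(M*S*M) := by
    rw [hQ2lin, hG2lin]
    simp only [sub_mul, mul_sub, add_mul, mul_add, smul_mul_assoc, mul_smul_comm, smul_smul,
      smul_add, smul_sub, one_mul, mul_one, mul_assoc]
    module
  -- the decomposition of 30 W
  have hW30 : (30:ℂ)•(S + (S+T) + (4:ℂ)•((S+T)*(S+T)) - (6:ℂ)•(M*S*M))
      = (36:ℂ)•(((1 : Matrix n n ℂ)-M)*S*((1 : Matrix n n ℂ)-M)) + Q2*S*Q2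
        + (15:ℂ)•(G2*((1 : Matrix n n ℂ)-S)*G2) + (10:ℂ)•(Hh*T*Hh) := by
    have e3 : G2*((1 : Matrix n n ℂ)-S)*G2 = G2*G2 - G2*S*G2 := by noncomm_ring
    have e4 : Hh*T*Hh = Hh*(S+T)*Hh - Hh*S*Hh := by noncomm_ring
    rw [e3, e4]
    have comb : (36:ℂ)•(((1 : Matrix n n ℂ)-M)*S*((1 : Matrix n n ℂ)-M)) + Q2*S*Q2
        + (15:ℂ)•(G2*G2 - G2*S*G2) + (10:ℂ)•(Hh*(S+T)*Hh - Hh*S*Hh)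
        = ((36:ℂ)•(((1 : Matrix n n ℂ)-M)*S*((1 : Matrix n n ℂ)-M)) + Q2*S*Q2
          - (15:ℂ)•(G2*S*G2) - (10:ℂ)•(Hh*S*Hh))
          + ((15:ℂ)•(G2*G2) + (10:ℂ)•(Hh*(S+T)*Hh)) := by module
    rw [comb, hSpart, hfnpart]
    module
  -- PSD of W
  have hc1 : (((1 : Matrix n n ℂ)-M)*S*((1 : Matrix n n ℂ)-M)).PosSemidef := by
    have hh : ((1 : Matrix n n ℂ) - M).IsHermitian := (isHermitian_one).sub hMh
    have := hS.mul_mul_conjTranspose_same ((1 : Matrix n n ℂ) - M)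
    rwa [hh.eq] at this
  have hc2 : (Q2*S*Q2).PosSemidef := by
    have := hS.mul_mul_conjTranspose_same Q2
    rwa [hQ2h.eq] at this
  have hc3 : (G2*((1 : Matrix n n ℂ)-S)*G2).PosSemidef := by
    have := hSle.mul_mul_conjTranspose_same G2
    rwa [hG2h.eq] at this
  have hc4 : (Hh*T*Hh).PosSemidef := by
    have := hT.mul_mul_conjTranspose_same Hh
    rwa [hHhh.eq] at this
  have cast36 : ((36:ℝ):ℂ) = (36:ℂ) := by norm_num
  have cast15 : ((15:ℝ):ℂ) = (15:ℂ) := by norm_num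
  have cast10 : ((10:ℝ):ℂ) = (10:ℂ) := by norm_num
  have h30 : ((30:ℂ)•(S + (S+T) + (4:ℂ)•((S+T)*(S+T)) - (6:ℂ)•(M*S*M))).PosSemidef := by
    rw [hW30]
    refine Matrix.PosSemidef.add (Matrix.PosSemidef.add (Matrix.PosSemidef.add ?_ hc2) ?_) ?_
    · rw [← cast36]; exact psd_smul_real hc1 (by norm_num)
    · rw [← cast15]; exact psd_smul_real hc3 (by norm_num)
    · rw [← cast10]; exact psd_smul_real hc4 (by norm_num)
  have hWpsd : (S + (S+T) + (4:ℂ)•((S+T)*(S+T)) - (6:ℂ)•(M*S*M)).PosSemidef := by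
    have heq : S + (S+T) + (4:ℂ)•((S+T)*(S+T)) - (6:ℂ)•(M*S*M)
        = (((1:ℝ)/30 : ℝ):ℂ)•((30:ℂ)•(S + (S+T) + (4:ℂ)•((S+T)*(S+T)) - (6:ℂ)•(M*S*M))) := by
      rw [smul_smul]
      norm_num
    rw [heq]
    exact psd_smul_real h30 (by norm_num)
  -- assemble goal
  have hPWP : P * (S + (S+T) + (4:ℂ)•((S+T)*(S+T)) - (6:ℂ)•(M*S*M)) * P
      = P*S*P + Pi + (4:ℂ)•(S+T) - (6:ℂ)•S := by
    have expand : P * (S + (S+T) + (4:ℂ)•((S+T)*(S+T)) - (6:ℂ)•(M*S*M)) * P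
        = P*S*P + P*(S+T)*P + (4:ℂ)•(P*((S+T)*(S+T))*P) - (6:ℂ)•(P*(M*S*M)*P) := by
      simp only [mul_add, add_mul, mul_sub, sub_mul, mul_smul_comm, smul_mul_assoc, mul_assoc]
    rw [expand, hPAP, hPAAP, hPMSMP]
  have hJpsd : ((1 : Matrix n n ℂ) - Pi).PosSemidef := by
    rw [hJ]
    refine cfc_posSemidef hA (fun i => ?_)
    unfold fInd
    rcases eq_or_ne (hA.eigenvalues i) 0 with h | h
    · rw [if_pos h]; norm_num
    · rw [if_neg h]; norm_num
  have hPWPpsd : (P * (S + (S+T) + (4:ℂ)•((S+T)*(S+T)) - (6:ℂ)•(M*S*M)) * P).PosSemidef := by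
    have := hWpsd.mul_mul_conjTranspose_same P
    rwa [hPh.eq] at this
  have hsum := hJpsd.add hPWPpsd
  have goal_eq : ((1 : Matrix n n ℂ) - Pi)
      + P * (S + (S+T) + (4:ℂ)•((S+T)*(S+T)) - (6:ℂ)•(M*S*M)) * P
      = (2 : ℂ) • ((1 : Matrix n n ℂ) - S) + (4 : ℂ) • T - ((1 : Matrix n n ℂ) - P * S * P) := by
    rw [hPWP]
    module
  rw [goal_eq] at hsum
  exact hsum
end

section
/- Let σ be a quantum state (positive semi-definite operator of trace one) on a finite-dimensional Hilbert space with spectral projections P_1,…,P_v onto its distinct eigenspaces, and let E_σ(ρ) = Σ_i P_i ρ P_i denote the pinching map. Then for any quantum state ρ, ρ ≤ v · E_σ(ρ), where v is the number of distinct eigenvalues of σ. -/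
/-!
Pinching inequality: let σ be a quantum state on a finite-dimensional Hilbert space
with spectral decomposition σ = Σ_i λ_i P_i, where the λ_i are distinct and the P_i
are orthogonal projections summing to the identity, and let
E_σ(ρ) = Σ_i P_i ρ P_i be the pinching map.  Then for every quantum state ρ,
ρ ≤ v · E_σ(ρ) in the Loewner order, where v is the number of distinct eigenvalues.
-/

open Matrix
open scoped ComplexOrder

lemma psd_smul_aux {n : Type*} [Fintype n] {M : Matrix n n ℂ} (hM : M.PosSemidef)
    {c : ℂ} (hc : 0 ≤ c) : (c • M).PosSemidef := by
  refine ⟨?_, fun x => ?_⟩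
  · unfold Matrix.IsHermitian
    rw [conjTranspose_smul, hM.1.eq]
    congr 1
    exact Complex.conj_eq_iff_im.2 (Complex.le_def.1 hc).2.symm
  · simp only [Matrix.smul_apply, smul_eq_mul]
    convert mul_nonneg hc (hM.2 x) using 1
    simp only [Finsupp.mul_sum]
    congr 1; funext i xi; congr 1; funext j xj; ring

theorem pinching_inequality {n : Type*} [Fintype n] [DecidableEq n]
    {v : ℕ} (P : Fin v → Matrix n n ℂ) (l : Fin v → ℝ)
    (hPherm : ∀ i, (P i).IsHermitian)
    (hPproj : ∀ i, P i * P i = P i)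
    (hPorth : ∀ i j, i ≠ j → P i * P j = 0)
    (hPsum : ∑ i, P i = (1 : Matrix n n ℂ))
    (hl_distinct : Function.Injective l)
    (hl_nonneg : ∀ i, 0 ≤ l i)
    (hσ_trace : (∑ i, (l i : ℂ) • P i).trace = 1)
    (ρ : Matrix n n ℂ) (hρ : ρ.PosSemidef) (hρ_trace : ρ.trace = 1) :
    ((v : ℂ) • (∑ i, P i * ρ * P i) - ρ).PosSemidef := by
  set S : Matrix n n ℂ := ∑ i, P i * ρ * P i with hS
  have hS' : S = ∑ x, P x * (ρ * P x) := by rw [hS]; simp only [mul_assoc]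
  have hterm : ∀ i j : Fin v, ((P i - P j) * ρ * (P i - P j)ᴴ).PosSemidef :=
    fun i j => hρ.mul_mul_conjTranspose_same _
  have hsum : (∑ i, ∑ j, (P i - P j) * ρ * (P i - P j)ᴴ).PosSemidef := by
    refine Finset.sum_induction _ _ (fun a b ha hb => ha.add hb) Matrix.PosSemidef.zero
      (fun i _ => ?_)
    exact Finset.sum_induction _ _ (fun a b ha hb => ha.add hb) Matrix.PosSemidef.zero
      (fun j _ => hterm i j)
  have hrow : ∀ i : Fin v, ∑ j, (P i - P j) * ρ * (P i - P j)
      = (v : ℂ) • (P i * ρ * P i) + S - P i * ρ - ρ * P i := by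
    intro i
    have expand : ∀ j, (P i - P j) * ρ * (P i - P j)
        = P i * ρ * P i - P i * ρ * P j - P j * ρ * P i + P j * ρ * P j := by
      intro j; noncomm_ring
    rw [Finset.sum_congr rfl fun j _ => expand j]
    simp only [Finset.sum_add_distrib, Finset.sum_sub_distrib, ← Finset.mul_sum,
      ← Finset.sum_mul, ← Matrix.mul_sum, ← Matrix.sum_mul, hPsum, mul_one,
      Finset.sum_const, Finset.card_univ, Fintype.card_fin]
    rw [Nat.cast_smul_eq_nsmul ℂ] at *
    rw [hS']
    noncomm_ring
  have heq : ∑ i, ∑ j, (P i - P j) * ρ * (P i - P j)ᴴ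
      = (2 : ℂ) • ((v : ℂ) • S - ρ) := by
    have hct : ∀ i j : Fin v, (P i - P j)ᴴ = P i - P j := by
      intro i j; rw [conjTranspose_sub, (hPherm i).eq, (hPherm j).eq]
    simp only [hct]
    rw [Finset.sum_congr rfl fun i _ => hrow i]
    simp only [Finset.sum_add_distrib, Finset.sum_sub_distrib, ← Finset.smul_sum,
      ← Matrix.mul_sum, ← Matrix.sum_mul, hPsum, mul_one, one_mul,
      Finset.sum_const, Finset.card_univ, Fintype.card_fin]
    rw [Nat.cast_smul_eq_nsmul ℂ] at *
    rw [hS']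
    simp only [mul_assoc]
    module
  have : ((v : ℂ) • S - ρ) = (2 : ℂ)⁻¹ • ∑ i, ∑ j, (P i - P j) * ρ * (P i - P j)ᴴ := by
    rw [heq, smul_smul]; norm_num
  rw [this]
  exact psd_smul_aux hsum (by rw [Complex.le_def]; norm_num)
end

section
/- Let ρ be a quantum state and Π a projection on a finite-dimensional Hilbert space such that Tr[Π ρ] ≥ 1 − ε for some 0 ≤ ε ≤ 1. Then ‖Π ρ Π − ρ‖_1 ≤ 2√ε, where ‖·‖_1 denotes the trace norm (gentle measurement lemma). -/
/-!
Gentle measurement lemma: if ρ is a quantum state (PSD, trace one), Π an orthogonal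
projection with Tr[Π ρ] ≥ 1 − ε for some 0 ≤ ε ≤ 1, then ‖Π ρ Π − ρ‖₁ ≤ 2√ε, where
‖A‖₁ = Tr[√(AᴴA)] is the trace norm.
-/

open Matrix
open scoped ComplexOrder

/-- Trace norm `‖A‖₁ = Tr √(AᴴA)` of a complex matrix, via functional calculus. -/
noncomputable def traceNorm {n : Type*} [Fintype n] [DecidableEq n]
    (A : Matrix n n ℂ) : ℝ :=
  ((Matrix.posSemidef_conjTranspose_mul_self A).1.cfc Real.sqrt).trace.re

set_option maxHeartbeats 1000000

namespace Gentle


variable {n : Type*} [Fintype n] [DecidableEq n]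

lemma star_mul_self' {A : Matrix n n ℂ} (hA : A.IsHermitian) :
    star (hA.eigenvectorUnitary : Matrix n n ℂ) * (hA.eigenvectorUnitary : Matrix n n ℂ) = 1 :=
  Matrix.UnitaryGroup.star_mul_self _

lemma mul_star_self' {A : Matrix n n ℂ} (hA : A.IsHermitian) :
    (hA.eigenvectorUnitary : Matrix n n ℂ) * star (hA.eigenvectorUnitary : Matrix n n ℂ) = 1 :=
  (Matrix.mem_unitaryGroup_iff).mp hA.eigenvectorUnitary.2

lemma cfc_mul {A : Matrix n n ℂ} (hA : A.IsHermitian) (f g : ℝ → ℝ) :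
    hA.cfc f * hA.cfc g = hA.cfc (fun x => f x * g x) := by
  simp only [Matrix.IsHermitian.cfc, Unitary.conjStarAlgAut_apply]
  have assoc : ∀ {a b c d e f : Matrix n n ℂ},
      (a * b * c) * (d * e * f) = a * (b * (c * d) * e) * f := by
    intros; simp only [mul_assoc]
  rw [assoc, star_mul_self' hA, mul_one, diagonal_mul_diagonal]
  congr 2
  congr 1
  simp [Matrix.diagonal_apply, Function.comp_def]

lemma cfc_id {A : Matrix n n ℂ} (hA : A.IsHermitian) : hA.cfc (fun x => x) = A := by
  simp only [Matrix.IsHermitian.cfc, Unitary.conjStarAlgAut_apply]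
  exact hA.spectral_theorem.symm

lemma cfc_one {A : Matrix n n ℂ} (hA : A.IsHermitian) : hA.cfc (fun _ => 1) = 1 := by
  simp only [Matrix.IsHermitian.cfc, Unitary.conjStarAlgAut_apply]
  have : (RCLike.ofReal ∘ (fun _ : ℝ => (1:ℝ)) ∘ hA.eigenvalues) = fun _ : n => (1 : ℂ) := by
    ext i; simp
  rw [this, diagonal_one, mul_one, mul_star_self' hA]

lemma cfc_sub {A : Matrix n n ℂ} (hA : A.IsHermitian) (f g : ℝ → ℝ) :
    hA.cfc f - hA.cfc g = hA.cfc (fun x => f x - g x) := by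
  simp only [Matrix.IsHermitian.cfc, Unitary.conjStarAlgAut_apply]
  have : diagonal (RCLike.ofReal ∘ (fun x => f x - g x) ∘ hA.eigenvalues : n → ℂ) =
      diagonal (RCLike.ofReal ∘ f ∘ hA.eigenvalues) -
        diagonal (RCLike.ofReal ∘ g ∘ hA.eigenvalues) := by
    rw [diagonal_sub]
    congr 1
    simp [Matrix.diagonal_apply, Function.comp_def]
  rw [this, mul_sub, sub_mul]

lemma cfc_posSemidef {A : Matrix n n ℂ} (hA : A.IsHermitian) {f : ℝ → ℝ}
    (hf : ∀ x, 0 ≤ f x) : (hA.cfc f).PosSemidef := by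
  simp only [Matrix.IsHermitian.cfc, Unitary.conjStarAlgAut_apply]
  rw [Matrix.star_eq_conjTranspose]
  apply Matrix.PosSemidef.mul_mul_conjTranspose_same
  refine posSemidef_diagonal_iff.mpr fun i => ?_
  rw [Function.comp_apply, RCLike.nonneg_iff]
  simp [hf _]

lemma cfc_isHermitian {A : Matrix n n ℂ} (hA : A.IsHermitian) (f : ℝ → ℝ) :
    (hA.cfc f).IsHermitian := by
  have h1 : star (RCLike.ofReal ∘ f ∘ hA.eigenvalues : n → ℂ) =
      RCLike.ofReal ∘ f ∘ hA.eigenvalues := by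
    ext i; simp [Complex.conj_ofReal]
  simp only [Matrix.IsHermitian, Matrix.IsHermitian.cfc, Unitary.conjStarAlgAut_apply, conjTranspose_mul,
    diagonal_conjTranspose, h1, Matrix.star_eq_conjTranspose, conjTranspose_conjTranspose,
    mul_assoc]

noncomputable def _root_.Matrix.PosSemidef.sqrt {A : Matrix n n ℂ} (hA : A.PosSemidef) :
    Matrix n n ℂ :=
  hA.1.cfc Real.sqrt

lemma _root_.Matrix.PosSemidef.posSemidef_sqrt {A : Matrix n n ℂ} (hA : A.PosSemidef) :
    hA.sqrt.PosSemidef :=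
  cfc_posSemidef hA.1 Real.sqrt_nonneg

lemma _root_.Matrix.PosSemidef.sqrt_mul_self {A : Matrix n n ℂ} (hA : A.PosSemidef) :
    hA.sqrt * hA.sqrt = A := by
  rw [Matrix.PosSemidef.sqrt, cfc_mul]
  conv_rhs => rw [← cfc_id hA.1]
  simp only [Matrix.IsHermitian.cfc]
  congr 3
  funext i
  simp [Real.mul_self_sqrt (hA.eigenvalues_nonneg i)]

open scoped MatrixOrder in
lemma _root_.Matrix.PosSemidef.eq_sqrt_of_sq_eq {A B : Matrix n n ℂ} (hA : A.PosSemidef)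
    (hB : B.PosSemidef) (h : A ^ 2 = B) : A = hB.sqrt := by
  have h1 : CFC.sqrt B = A := (CFC.sqrt_eq_iff B A hB.nonneg hA.nonneg).mpr (by rw [← h, sq])
  rw [← h1, CFC.sqrt_eq_real_sqrt B hB.nonneg, cfcₙ_eq_cfc, hB.1.cfc_eq]
  rfl

set_option maxHeartbeats 1000000 in
lemma trace_re_nonneg {M : Matrix n n ℂ} (hM : M.PosSemidef) : 0 ≤ M.trace.re := by
  have hd : ∀ i, 0 ≤ (M i i).re := by
    intro i
    have h := hM.dotProduct_mulVec_nonneg (Pi.single i 1)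
    have heq : (star (Pi.single i 1) ⬝ᵥ M *ᵥ Pi.single i 1 : ℂ) = M i i := by
      have h1 : star (Pi.single i 1 : n → ℂ) = Pi.single i 1 := by
        ext j
        rcases eq_or_ne j i with rfl | hj
        · simp
        · simp [Pi.single_apply, hj]
      rw [h1, single_dotProduct, Matrix.mulVec_single]
      simp
    rw [heq] at h
    exact (Complex.le_def.mp h).1
  rw [Matrix.trace, Complex.re_sum]
  exact Finset.sum_nonneg fun i _ => hd i

lemma trace_mul_psd_nonneg {C D : Matrix n n ℂ} (hC : C.PosSemidef) (hD : D.PosSemidef) :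
    0 ≤ ((C * D).trace).re := by
  have h1 : C * D = hC.sqrt * (hC.sqrt * D) := by
    rw [← mul_assoc, hC.sqrt_mul_self]
  rw [h1, Matrix.trace_mul_comm, mul_assoc]
  have h2 : (hC.sqrt * D * hC.sqrt).PosSemidef := by
    have := hD.conjTranspose_mul_mul_same hC.sqrt
    rwa [hC.posSemidef_sqrt.1.eq] at this
  rw [← mul_assoc]
  exact trace_re_nonneg h2

lemma trace_cs (X Y : Matrix n n ℂ) :
    ((Xᴴ * Y).trace).re ≤ Real.sqrt (((Xᴴ * X).trace).re) * Real.sqrt (((Yᴴ * Y).trace).re) := by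
  classical
  let x : EuclideanSpace ℂ (n × n) := (WithLp.equiv 2 _).symm fun p => X p.1 p.2
  let y : EuclideanSpace ℂ (n × n) := (WithLp.equiv 2 _).symm fun p => Y p.1 p.2
  have key : ∀ (A B : Matrix n n ℂ),
      ((Aᴴ * B).trace) = ∑ p : n × n, (starRingEnd ℂ) (A p.1 p.2) * B p.1 p.2 := by
    intro A B
    rw [Matrix.trace, Fintype.sum_prod_type, Finset.sum_comm]
    simp [Matrix.diag, Matrix.mul_apply, Matrix.conjTranspose_apply, mul_comm]
  have hentry : ∀ (A : Matrix n n ℂ) (p : n × n),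
      ((starRingEnd ℂ) (A p.1 p.2) * A p.1 p.2).re = ‖A p.1 p.2‖ ^ 2 := by
    intro A p
    rw [mul_comm, Complex.mul_conj', ← Complex.ofReal_pow, Complex.ofReal_re]
  have hxy : (Xᴴ * Y).trace = inner (𝕜 := ℂ) x y := by
    rw [key, PiLp.inner_apply]
    simp [x, y, WithLp.equiv_symm_apply, PiLp.toLp_apply, RCLike.inner_apply, mul_comm]
  have hxx : Real.sqrt ((Xᴴ * X).trace.re) = ‖x‖ := by
    rw [EuclideanSpace.norm_eq]
    congr 1
    rw [key, Complex.re_sum]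
    refine Finset.sum_congr rfl fun p _ => ?_
    rw [hentry]
    simp [x, WithLp.equiv_symm_apply, PiLp.toLp_apply]
  have hyy : Real.sqrt ((Yᴴ * Y).trace.re) = ‖y‖ := by
    rw [EuclideanSpace.norm_eq]
    congr 1
    rw [key, Complex.re_sum]
    refine Finset.sum_congr rfl fun p _ => ?_
    rw [hentry]
    simp [y, WithLp.equiv_symm_apply, PiLp.toLp_apply]
  rw [hxy, hxx, hyy]
  calc (inner (𝕜 := ℂ) x y).re ≤ ‖(inner (𝕜 := ℂ) x y : ℂ)‖ := Complex.re_le_norm _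
  _ ≤ ‖x‖ * ‖y‖ := norm_inner_le_norm x y

end Gentle

open Gentle in
theorem gentle_measurement {n : Type*} [Fintype n] [DecidableEq n]
    (ρ Pr : Matrix n n ℂ) (hρ : ρ.PosSemidef) (hρtr : ρ.trace = 1)
    (hPherm : Pr.IsHermitian) (hPidem : Pr * Pr = Pr)
    (ε : ℝ) (hε0 : 0 ≤ ε) (hε1 : ε ≤ 1)
    (h : 1 - ε ≤ ((Pr * ρ).trace).re) :
    traceNorm (Pr * ρ * Pr - ρ) ≤ 2 * Real.sqrt ε := by
  classical
  set S := hρ.sqrt with hSdef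
  have hS : S.PosSemidef := hρ.posSemidef_sqrt
  have hSh : Sᴴ = S := hS.1
  have hSS : S * S = ρ := hρ.sqrt_mul_self
  have hK : (Pr - 1 : Matrix n n ℂ)ᴴ = Pr - 1 := by
    rw [conjTranspose_sub, hPherm.eq, conjTranspose_one]
  have hA : (Pr * ρ * Pr - ρ).IsHermitian := by
    have h1 : (Pr * ρ * Pr).IsHermitian := by
      show (Pr * ρ * Pr)ᴴ = Pr * ρ * Pr
      simp only [conjTranspose_mul, hρ.1.eq, hPherm.eq, mul_assoc]
    exact h1.sub hρ.1
  set W := hA.cfc Real.sign with hWdef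
  have hW : W.IsHermitian := cfc_isHermitian hA _
  -- sign * id = abs
  have hsign : ∀ x : ℝ, Real.sign x * x = |x| := by
    intro x
    rcases lt_trichotomy x 0 with hx | hx | hx
    · simp [Real.sign_of_neg hx, abs_of_neg hx]
    · simp [hx]
    · simp [Real.sign_of_pos hx, abs_of_pos hx]
  have hWA : W * (Pr * ρ * Pr - ρ) = hA.cfc (fun x => |x|) := by
    conv_lhs => rw [show (Pr * ρ * Pr - ρ) = hA.cfc (fun x => x) from (cfc_id hA).symm]
    rw [hWdef, Gentle.cfc_mul]
    rw [show (fun x : ℝ => Real.sign x * x) = fun x : ℝ => |x| from funext hsign]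
  have hWApsd : (W * (Pr * ρ * Pr - ρ)).PosSemidef := by
    rw [hWA]; exact cfc_posSemidef hA (fun x => abs_nonneg x)
  have hWAsq : (W * (Pr * ρ * Pr - ρ)) ^ 2 = (Pr * ρ * Pr - ρ)ᴴ * (Pr * ρ * Pr - ρ) := by
    rw [hWA, pow_two, Gentle.cfc_mul, hA.eq]
    conv_rhs => rw [show (Pr * ρ * Pr - ρ) = hA.cfc (fun x => x) from (cfc_id hA).symm]
    rw [Gentle.cfc_mul]
    rw [show (fun x : ℝ => |x| * |x|) = fun x : ℝ => x * x from funext fun x => abs_mul_abs_self x]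
  have hkey : W * (Pr * ρ * Pr - ρ)
      = (Matrix.posSemidef_conjTranspose_mul_self (Pr * ρ * Pr - ρ)).sqrt :=
    hWApsd.eq_sqrt_of_sq_eq _ hWAsq
  have hTN : traceNorm (Pr * ρ * Pr - ρ) = ((W * (Pr * ρ * Pr - ρ)).trace).re := by
    rw [traceNorm, hkey]
    rfl
  -- trace decomposition
  have hdecomp : (W * (Pr * ρ * Pr - ρ)).trace
      = (Pr * (W * ((Pr - 1) * ρ))).trace + ((Pr - 1) * (W * ρ)).trace := by
    have c1 : W * (Pr * ρ * Pr - ρ) = (W * Pr * ρ) * Pr - W * ρ := by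
      rw [mul_sub]; simp only [mul_assoc]
    have c2 : ((W * Pr * ρ) * Pr).trace = ((Pr * W * Pr) * ρ).trace := by
      rw [Matrix.trace_mul_comm]; simp only [mul_assoc]
    have c3 : (Pr * W * Pr) * ρ = Pr * (W * ((Pr - 1) * ρ)) + ((Pr - 1) * (W * ρ) + W * ρ) := by
      noncomm_ring
    rw [c1, Matrix.trace_sub, c2, c3, Matrix.trace_add, Matrix.trace_add]
    ring
  -- the defect quantities
  have hPP1 : (Pr - 1) * (Pr - 1) = 1 - Pr := by
    have e : (Pr - 1) * (Pr - 1) = Pr * Pr - Pr - Pr + 1 := by noncomm_ring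
    rw [e, hPidem]; abel
  have hq_eq : ((Pr - 1) * ρ * (Pr - 1)).trace = ρ.trace - (Pr * ρ).trace := by
    rw [Matrix.trace_mul_comm, ← mul_assoc, hPP1, sub_mul, one_mul, Matrix.trace_sub]
  have hqpsd : ((Pr - 1) * ρ * (Pr - 1)).PosSemidef := by
    have := hρ.conjTranspose_mul_mul_same (Pr - 1)
    rwa [hK] at this
  have hq_re : (((Pr - 1) * ρ * (Pr - 1)).trace).re = 1 - ((Pr * ρ).trace).re := by
    rw [hq_eq, Complex.sub_re, hρtr]; norm_num
  have hq0 : 0 ≤ (((Pr - 1) * ρ * (Pr - 1)).trace).re := trace_re_nonneg hqpsd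
  have hqε : (((Pr - 1) * ρ * (Pr - 1)).trace).re ≤ ε := by rw [hq_re]; linarith
  have hPpsd : Pr.PosSemidef := by
    have := Matrix.posSemidef_conjTranspose_mul_self Pr
    rwa [hPherm.eq, hPidem] at this
  have hp1 : ((Pr * ρ).trace).re ≤ 1 := by linarith
  have hp0 : 0 ≤ ((Pr * ρ).trace).re := trace_mul_psd_nonneg hPpsd hρ
  -- 1 - W² is psd
  have h1W2 : ((1 : Matrix n n ℂ) - W * W).PosSemidef := by
    have e : (1 : Matrix n n ℂ) - W * W
        = hA.cfc (fun x => 1 - Real.sign x * Real.sign x) := by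
      rw [hWdef, Gentle.cfc_mul, ← Gentle.cfc_one hA, Gentle.cfc_sub]
    rw [e]
    refine cfc_posSemidef hA fun x => ?_
    rcases lt_trichotomy x 0 with hx | hx | hx
    · simp [Real.sign_of_neg hx]
    · simp [hx]
    · simp [Real.sign_of_pos hx]
  have hWWle : ∀ {M : Matrix n n ℂ}, M.PosSemidef → ((W * (W * M)).trace).re ≤ M.trace.re := by
    intro M hM
    have e : M.trace - (W * (W * M)).trace = (((1 : Matrix n n ℂ) - W * W) * M).trace := by
      rw [sub_mul, one_mul, Matrix.trace_sub]
      simp only [mul_assoc]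
    have := trace_mul_psd_nonneg h1W2 hM
    rw [← e, Complex.sub_re] at this
    linarith
  -- first Cauchy-Schwarz
  have hX1 : (S * ((Pr - 1) * W))ᴴ = W * ((Pr - 1) * S) := by
    simp only [conjTranspose_mul, hSh, hK, hW.eq, mul_assoc]
  have t1 : ((Pr * (W * ((Pr - 1) * ρ))).trace).re ≤ Real.sqrt ε * 1 := by
    have e1 : ((S * ((Pr - 1) * W))ᴴ * (S * Pr)).trace = (Pr * (W * ((Pr - 1) * ρ))).trace := by
      rw [hX1, show W * ((Pr - 1) * S) * (S * Pr) = (W * ((Pr - 1) * ρ)) * Pr by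
        simp only [← hSS, mul_assoc], Matrix.trace_mul_comm]
    have e2 : (((S * ((Pr - 1) * W))ᴴ * (S * ((Pr - 1) * W))).trace).re
        ≤ (((Pr - 1) * ρ * (Pr - 1)).trace).re := by
      have e : (S * ((Pr - 1) * W))ᴴ * (S * ((Pr - 1) * W))
          = (W * ((Pr - 1) * (ρ * (Pr - 1)))) * W := by
        rw [hX1]; simp only [← hSS, mul_assoc]
      rw [e, Matrix.trace_mul_comm]
      have : W * (W * ((Pr - 1) * (ρ * (Pr - 1)))) = W * (W * ((Pr - 1) * ρ * (Pr - 1))) := by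
        simp only [mul_assoc]
      rw [this]
      exact hWWle hqpsd
    have e3 : ((S * Pr)ᴴ * (S * Pr)).trace = (Pr * ρ).trace := by
      rw [conjTranspose_mul, hSh, hPherm.eq,
        show Pr * S * (S * Pr) = (Pr * ρ) * Pr by simp only [← hSS, mul_assoc],
        Matrix.trace_mul_comm, ← mul_assoc, hPidem]
    calc ((Pr * (W * ((Pr - 1) * ρ))).trace).re
        = (((S * ((Pr - 1) * W))ᴴ * (S * Pr)).trace).re := by rw [e1]
      _ ≤ Real.sqrt ((((S * ((Pr - 1) * W))ᴴ * (S * ((Pr - 1) * W))).trace).re)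
          * Real.sqrt ((((S * Pr)ᴴ * (S * Pr)).trace).re) := trace_cs _ _
      _ ≤ Real.sqrt ε * 1 := by
          apply mul_le_mul
          · exact Real.sqrt_le_sqrt (le_trans e2 hqε) |>.trans (le_of_eq rfl)
          · rw [e3]; exact Real.sqrt_le_one.mpr hp1
          · exact Real.sqrt_nonneg _
          · exact Real.sqrt_nonneg _
  -- second Cauchy-Schwarz
  have t2 : (((Pr - 1) * (W * ρ)).trace).re ≤ 1 * Real.sqrt ε := by
    have e1 : ((S * W)ᴴ * (S * (Pr - 1))).trace = ((Pr - 1) * (W * ρ)).trace := by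
      rw [conjTranspose_mul, hSh, hW.eq,
        show W * S * (S * (Pr - 1)) = (W * ρ) * (Pr - 1) by simp only [← hSS, mul_assoc],
        Matrix.trace_mul_comm]
    have e2 : (((S * W)ᴴ * (S * W)).trace).re ≤ 1 := by
      rw [conjTranspose_mul, hSh, hW.eq,
        show W * S * (S * W) = (W * ρ) * W by simp only [← hSS, mul_assoc],
        Matrix.trace_mul_comm, show W * (W * ρ) = W * (W * ρ) from rfl]
      have := hWWle hρ
      rw [hρtr] at this
      simpa using this
    have e3 : ((S * (Pr - 1))ᴴ * (S * (Pr - 1))).trace = ((Pr - 1) * ρ * (Pr - 1)).trace := by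
      rw [conjTranspose_mul, hSh, hK]
      simp only [← hSS, mul_assoc]
    calc (((Pr - 1) * (W * ρ)).trace).re
        = (((S * W)ᴴ * (S * (Pr - 1))).trace).re := by rw [e1]
      _ ≤ Real.sqrt ((((S * W)ᴴ * (S * W)).trace).re)
          * Real.sqrt ((((S * (Pr - 1))ᴴ * (S * (Pr - 1))).trace).re) := trace_cs _ _
      _ ≤ 1 * Real.sqrt ε := by
          apply mul_le_mul
          · exact Real.sqrt_le_one.mpr e2
          · rw [e3]; exact Real.sqrt_le_sqrt hqε
          · exact Real.sqrt_nonneg _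
          · exact zero_le_one
  rw [hTN, hdecomp, Complex.add_re]
  linarith
end
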